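/- Under the described setup, suppose additionally that E[r(a) | X] = f*(X, a) almost surely for every a ∈ 𝒜 (realizability). Then E[Y] = (1/k)·Σ_{a ∈ 𝒜} E[(f(X,a) − f*(X,a))²·χ(a)], and Var[Y] ≤ 4·E[Y]. -/

import Mathlib

open MeasureTheory ProbabilityTheory Filter Topology

lemma int_bdd {Ω : Type*} {mΩ : MeasurableSpace Ω} {μ : Measure Ω} [IsFiniteMeasure μ]
    {g : Ω → ℝ} (hg : AEStronglyMeasurable g μ) {C : ℝ} (h : ∀ ω, ‖g ω‖ ≤ C) :
    Integrable g μ :=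
  ⟨hg, HasFiniteIntegral.of_bounded (Eventually.of_forall h)⟩

lemma condexp_mul_of_condIndepFun
    {Ω : Type*} {m0 : MeasurableSpace Ω} [StandardBorelSpace Ω]
    (μ : Measure Ω) [IsProbabilityMeasure μ]
    {m : MeasurableSpace Ω} (hm : m ≤ m0)
    {χ r : Ω → ℝ} (hχ : Measurable[m0] χ) (hr : Measurable[m0] r)
    (hχ01 : ∀ ω, χ ω = 0 ∨ χ ω = 1) (hr1 : ∀ ω, ‖r ω‖ ≤ 1)
    (hind : CondIndepFun m hm χ r μ) :
    μ[fun ω => χ ω * r ω | m] =ᵐ[μ] fun ω => (μ[χ|m]) ω * (μ[r|m]) ω := by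
  classical
  set A : Set Ω := χ ⁻¹' {1} with hA_def
  have hmemA : ∀ ω, ω ∈ A ↔ χ ω = 1 := fun ω => Iff.rfl
  have hχ_ind : χ = A.indicator (fun _ => (1:ℝ)) := by
    funext ω
    rcases hχ01 ω with h0 | h1
    · have : ω ∉ A := by simp [hmemA, h0]
      simp [Set.indicator_apply, this, h0]
    · have : ω ∈ A := by simp [hmemA, h1]
      simp [Set.indicator_apply, this, h1]
  have hχ_norm : ∀ ω, ‖χ ω‖ ≤ 1 := by
    intro ω; rcases hχ01 ω with h | h <;> simp [h]
  -- set version of the factorization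
  have hkey : ∀ t : Set ℝ, MeasurableSet t →
      (μ[(A ∩ r ⁻¹' t).indicator (fun _ => (1:ℝ)) | m]) =ᵐ[μ]
        fun ω => (μ[A.indicator (fun _ => (1:ℝ)) | m]) ω *
          (μ[(r ⁻¹' t).indicator (fun _ => (1:ℝ)) | m]) ω := by
    intro t ht
    exact (condIndepFun_iff_condExp_inter_preimage_eq_mul (hm' := hm) hχ hr).mp hind
      {1} t (measurableSet_singleton 1) ht
  -- step: simple functions w.r.t. the σ-algebra generated by r
  have hmr_le : MeasurableSpace.comap r inferInstance ≤ m0 := hr.comap_le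
  have hsimple : ∀ s : @SimpleFunc Ω (MeasurableSpace.comap r inferInstance) ℝ,
      μ[fun ω => χ ω * s ω | m] =ᵐ[μ] fun ω => (μ[χ|m]) ω * (μ[fun ω' => s ω' | m]) ω := by
    have hbase : ∀ (c : ℝ) (u : Set Ω) (t : Set ℝ), MeasurableSet t → r ⁻¹' t = u →
        ∀ F : Ω → ℝ, (∀ ω, F ω = u.indicator (fun _ => c) ω) →
        μ[fun ω => χ ω * F ω | m] =ᵐ[μ]
          fun ω => (μ[χ|m]) ω * (μ[fun ω' => F ω' | m]) ω := by
      intro c u t ht hts F hF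
      have h1 : (fun ω => χ ω * F ω)
          = fun ω => c * (A ∩ u).indicator (fun _ => (1:ℝ)) ω := by
        funext ω
        rw [hF]
        by_cases hω : ω ∈ u
        · rcases hχ01 ω with h0 | hone
          · have : ω ∉ A := by simp [hmemA, h0]
            simp [Set.indicator_apply, hω, this, h0]
          · have : ω ∈ A := by simp [hmemA, hone]
            simp [Set.indicator_apply, hω, this, hone]
        · have : ω ∉ A ∩ u := fun h => hω h.2
          simp [Set.indicator_apply, hω, this]
      have h2 : (fun ω => F ω) = fun ω => c * u.indicator (fun _ => (1:ℝ)) ω := by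
        funext ω
        rw [hF]
        by_cases hω : ω ∈ u <;> simp [Set.indicator_apply, hω]
      rw [h1, h2]
      have hsmul1 : μ[fun ω => c * (A ∩ u).indicator (fun _ => (1:ℝ)) ω | m]
          =ᵐ[μ] fun ω => c * (μ[(A ∩ u).indicator (fun _ => (1:ℝ)) | m]) ω := by
        exact condExp_smul (μ := μ) (m := m) c
          ((A ∩ u).indicator (fun _ => (1:ℝ)))
      have hsmul2 : μ[fun ω => c * u.indicator (fun _ => (1:ℝ)) ω | m]
          =ᵐ[μ] fun ω => c * (μ[u.indicator (fun _ => (1:ℝ)) | m]) ω := by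
        exact condExp_smul (μ := μ) (m := m) c
          (u.indicator (fun _ => (1:ℝ)))
      have hfac := hkey t ht
      rw [hts] at hfac
      have hχcond : μ[χ|m] =ᵐ[μ] μ[A.indicator (fun _ => (1:ℝ)) | m] := by
        rw [← hχ_ind]
      filter_upwards [hsmul1, hsmul2, hfac, hχcond] with ω e1 e2 e3 e4
      rw [e1, e3, e2, e4]; ring
    intro s
    refine @SimpleFunc.induction Ω ℝ (MeasurableSpace.comap r inferInstance) _
      (fun s => μ[fun ω => χ ω * s ω | m] =ᵐ[μ]
        fun ω => (μ[χ|m]) ω * (μ[fun ω' => s ω' | m]) ω) ?_ ?_ s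
    · intro c u hu
      obtain ⟨t, ht, hts⟩ := id hu
      refine hbase c u t ht hts _ fun ω => ?_
      by_cases hω : ω ∈ u <;>
        simp [SimpleFunc.piecewise_apply, Set.indicator_apply, hω]
    · intro p q _ hp hq
      have hp_m0 : Measurable[m0] (fun ω => p ω) := (@SimpleFunc.measurable Ω ℝ (MeasurableSpace.comap r inferInstance) _ p).mono hmr_le le_rfl
      have hq_m0 : Measurable[m0] (fun ω => q ω) := (@SimpleFunc.measurable Ω ℝ (MeasurableSpace.comap r inferInstance) _ q).mono hmr_le le_rfl
      obtain ⟨Cp, hCp⟩ := @SimpleFunc.exists_forall_norm_le Ω ℝ (MeasurableSpace.comap r inferInstance) _ p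
      obtain ⟨Cq, hCq⟩ := @SimpleFunc.exists_forall_norm_le Ω ℝ (MeasurableSpace.comap r inferInstance) _ q
      have hp_int : Integrable (fun ω => χ ω * p ω) μ := by
        refine int_bdd ((hχ.mul hp_m0).aestronglyMeasurable) (C := Cp) fun ω => ?_
        calc ‖χ ω * p ω‖ = ‖χ ω‖ * ‖p ω‖ := norm_mul _ _
          _ ≤ 1 * Cp := mul_le_mul (hχ_norm ω) (hCp ω) (norm_nonneg _) zero_le_one
          _ = Cp := one_mul Cp
      have hq_int : Integrable (fun ω => χ ω * q ω) μ := by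
        refine int_bdd ((hχ.mul hq_m0).aestronglyMeasurable) (C := Cq) fun ω => ?_
        calc ‖χ ω * q ω‖ = ‖χ ω‖ * ‖q ω‖ := norm_mul _ _
          _ ≤ 1 * Cq := mul_le_mul (hχ_norm ω) (hCq ω) (norm_nonneg _) zero_le_one
          _ = Cq := one_mul Cq
      have hp_int' : Integrable (fun ω => p ω) μ := int_bdd hp_m0.aestronglyMeasurable hCp
      have hq_int' : Integrable (fun ω => q ω) μ := int_bdd hq_m0.aestronglyMeasurable hCq
      have hsum1 : (fun ω => χ ω * (p + q) ω)
          = (fun ω => χ ω * p ω) + fun ω => χ ω * q ω := by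
        funext ω; simp [mul_add]
      have hsum2 : (fun ω => ((p + q) :
          @SimpleFunc Ω (MeasurableSpace.comap r inferInstance) ℝ) ω)
          = (fun ω => p ω) + fun ω => q ω := by
        funext ω; simp
      rw [hsum1, hsum2]
      have hadd1 := condExp_add (μ := μ) (m := m) hp_int hq_int
      have hadd2 := condExp_add (μ := μ) (m := m) hp_int' hq_int'
      filter_upwards [hadd1, hadd2, hp, hq] with ω e1 e2 e3 e4
      simp only [Pi.add_apply] at e1 e2 ⊢
      rw [e1, e2, e3, e4]; ring
  -- approximation of r by simple functions measurable w.r.t. σ(r)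
  have hr_mr : Measurable[MeasurableSpace.comap r inferInstance] r :=
    Measurable.of_comap_le le_rfl
  have hr_sm : StronglyMeasurable[MeasurableSpace.comap r inferInstance] r :=
    hr_mr.stronglyMeasurable
  set sm : ℕ → @SimpleFunc Ω (MeasurableSpace.comap r inferInstance) ℝ :=
    hr_sm.approxBounded 1 with hsm_def
  have hsm_tendsto : ∀ ω, Tendsto (fun n => sm n ω) atTop (nhds (r ω)) :=
    fun ω => hr_sm.tendsto_approxBounded_of_norm_le (hr1 ω)
  have hsm_norm : ∀ n ω, ‖sm n ω‖ ≤ 1 :=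
    fun n ω => hr_sm.norm_approxBounded_le zero_le_one n ω
  have hsm_m0 : ∀ n, Measurable[m0] (fun ω => sm n ω) :=
    fun n => (@SimpleFunc.measurable Ω ℝ (MeasurableSpace.comap r inferInstance) _ (sm n)).mono hmr_le le_rfl
  -- integrabilities
  have hχ_int : Integrable χ μ := int_bdd hχ.aestronglyMeasurable hχ_norm
  have hEχ_sm : StronglyMeasurable[m] (μ[χ|m]) := stronglyMeasurable_condExp
  have hEχ_int : Integrable (μ[χ|m]) μ := integrable_condExp
  have hEχ_asm : AEStronglyMeasurable[m0] (μ[χ|m]) μ := (hEχ_sm.mono hm).aestronglyMeasurable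
  -- apply uniqueness of limits of condexp
  have hmain : μ[fun ω => χ ω * r ω | m] =ᵐ[μ] μ[fun ω => (μ[χ|m]) ω * r ω | m] := by
    refine tendsto_condExp_unique (μ := μ) (m := m)
      (fun n ω => χ ω * sm n ω) (fun n ω => (μ[χ|m]) ω * sm n ω)
      (fun ω => χ ω * r ω) (fun ω => (μ[χ|m]) ω * r ω)
      ?_ ?_ ?_ ?_ (fun _ => 1) (integrable_const 1)
      (fun ω => ‖(μ[χ|m]) ω‖) hEχ_int.norm ?_ ?_ ?_
    · intro n
      refine int_bdd ((hχ.mul (hsm_m0 n)).aestronglyMeasurable) (C := 1) fun ω => ?_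
      calc ‖χ ω * sm n ω‖ = ‖χ ω‖ * ‖sm n ω‖ := norm_mul _ _
        _ ≤ 1 * 1 := mul_le_mul (hχ_norm ω) (hsm_norm n ω) (norm_nonneg _) zero_le_one
        _ = 1 := one_mul 1
    · intro n
      refine Integrable.mono' hEχ_int.norm
        (hEχ_asm.mul (hsm_m0 n).aestronglyMeasurable)
        (Eventually.of_forall fun ω => ?_)
      calc ‖(μ[χ|m]) ω * sm n ω‖ = ‖(μ[χ|m]) ω‖ * ‖sm n ω‖ := norm_mul _ _
        _ ≤ ‖(μ[χ|m]) ω‖ * 1 := mul_le_mul_of_nonneg_left (hsm_norm n ω) (norm_nonneg _)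
        _ = ‖(μ[χ|m]) ω‖ := mul_one _
    · exact Eventually.of_forall fun ω => (Tendsto.const_mul (χ ω) (hsm_tendsto ω))
    · exact Eventually.of_forall fun ω => (Tendsto.const_mul _ (hsm_tendsto ω))
    · intro n
      refine Eventually.of_forall fun ω => ?_
      calc ‖χ ω * sm n ω‖ = ‖χ ω‖ * ‖sm n ω‖ := norm_mul _ _
        _ ≤ 1 * 1 := mul_le_mul (hχ_norm ω) (hsm_norm n ω) (norm_nonneg _) zero_le_one
        _ = 1 := one_mul 1
    · intro n
      refine Eventually.of_forall fun ω => ?_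
      calc ‖(μ[χ|m]) ω * sm n ω‖ = ‖(μ[χ|m]) ω‖ * ‖sm n ω‖ := norm_mul _ _
        _ ≤ ‖(μ[χ|m]) ω‖ * 1 := mul_le_mul_of_nonneg_left (hsm_norm n ω) (norm_nonneg _)
        _ = ‖(μ[χ|m]) ω‖ := mul_one _
    · intro n
      have hsm_int : Integrable (fun ω => sm n ω) μ :=
        int_bdd (hsm_m0 n).aestronglyMeasurable (hsm_norm n)
      have hprod_int : Integrable ((μ[χ|m]) * fun ω => sm n ω) μ := by
        refine Integrable.mono' hEχ_int.norm
          (hEχ_asm.mul (hsm_m0 n).aestronglyMeasurable)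
          (Eventually.of_forall fun ω => ?_)
        calc ‖(μ[χ|m]) ω * sm n ω‖ = ‖(μ[χ|m]) ω‖ * ‖sm n ω‖ := norm_mul _ _
          _ ≤ ‖(μ[χ|m]) ω‖ * 1 := mul_le_mul_of_nonneg_left (hsm_norm n ω) (norm_nonneg _)
          _ = ‖(μ[χ|m]) ω‖ := mul_one _
      have hpull := condExp_mul_of_stronglyMeasurable_left hEχ_sm hprod_int hsm_int
      exact (hsimple (sm n)).trans hpull.symm
  -- conclude using the pull-out property once more
  have hr_int : Integrable r μ := int_bdd hr.aestronglyMeasurable hr1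
  have hprod_int : Integrable ((μ[χ|m]) * r) μ := by
    refine Integrable.mono' hEχ_int.norm
      (hEχ_asm.mul hr.aestronglyMeasurable)
      (Eventually.of_forall fun ω => ?_)
    calc ‖(μ[χ|m]) ω * r ω‖ = ‖(μ[χ|m]) ω‖ * ‖r ω‖ := norm_mul _ _
      _ ≤ ‖(μ[χ|m]) ω‖ * 1 := mul_le_mul_of_nonneg_left (hr1 ω) (norm_nonneg _)
      _ = ‖(μ[χ|m]) ω‖ := mul_one _
  have hpull := condExp_mul_of_stronglyMeasurable_left hEχ_sm hprod_int hr_int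
  exact hmain.trans hpull

lemma integral_mul_r_chi
    {Ω : Type*} {m0 : MeasurableSpace Ω} [StandardBorelSpace Ω]
    (μ : Measure Ω) [IsProbabilityMeasure μ]
    {m : MeasurableSpace Ω} (hm : m ≤ m0)
    {χ r φ g : Ω → ℝ} (hχ : Measurable[m0] χ) (hr : Measurable[m0] r)
    (hχ01 : ∀ ω, χ ω = 0 ∨ χ ω = 1) (hr1 : ∀ ω, ‖r ω‖ ≤ 1)
    (hind : CondIndepFun m hm χ r μ)
    (hφ : StronglyMeasurable[m] φ) (hφ1 : ∀ ω, ‖φ ω‖ ≤ 1)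
    (hg : StronglyMeasurable[m] g) (hg1 : ∀ ω, ‖g ω‖ ≤ 1)
    (hreal : μ[r|m] =ᵐ[μ] g) :
    ∫ ω, φ ω * r ω * χ ω ∂μ = ∫ ω, φ ω * g ω * χ ω ∂μ := by
  have hχ_norm : ∀ ω, ‖χ ω‖ ≤ 1 := by
    intro ω; rcases hχ01 ω with h | h <;> simp [h]
  have hmul11 : ∀ (u v : ℝ), ‖u‖ ≤ 1 → ‖v‖ ≤ 1 → ‖u * v‖ ≤ 1 := by
    intro u v hu hv
    calc ‖u * v‖ = ‖u‖ * ‖v‖ := norm_mul _ _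
      _ ≤ 1 * 1 := mul_le_mul hu hv (norm_nonneg _) zero_le_one
      _ = 1 := one_mul 1
  have hφ_asm : AEStronglyMeasurable[m0] φ μ := (hφ.mono hm).aestronglyMeasurable
  have hg_asm : AEStronglyMeasurable[m0] g μ := (hg.mono hm).aestronglyMeasurable
  set G : Ω → ℝ := fun ω => χ ω * r ω with hG_def
  have hG_asm : AEStronglyMeasurable[m0] G μ := (hχ.mul hr).aestronglyMeasurable
  have hG_int : Integrable G μ := int_bdd hG_asm fun ω => hmul11 _ _ (hχ_norm ω) (hr1 ω)
  have hφG_int : Integrable (φ * G) μ :=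
    int_bdd (hφ_asm.mul hG_asm) fun ω =>
      hmul11 _ _ (hφ1 ω) (hmul11 _ _ (hχ_norm ω) (hr1 ω))
  set H : Ω → ℝ := fun ω => φ ω * g ω with hH_def
  have hH_sm : StronglyMeasurable[m] H := hφ.mul hg
  have hH_asm : AEStronglyMeasurable[m0] H μ := (hH_sm.mono hm).aestronglyMeasurable
  have hH1 : ∀ ω, ‖H ω‖ ≤ 1 := fun ω => hmul11 _ _ (hφ1 ω) (hg1 ω)
  have hχ_int : Integrable χ μ := int_bdd hχ.aestronglyMeasurable hχ_norm
  have hHχ_int : Integrable (H * χ) μ :=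
    int_bdd (hH_asm.mul hχ.aestronglyMeasurable) fun ω => hmul11 _ _ (hH1 ω) (hχ_norm ω)
  have hfac := condexp_mul_of_condIndepFun μ hm hχ hr hχ01 hr1 hind
  have step3 : μ[φ * G|m] =ᵐ[μ] φ * μ[G|m] :=
    condExp_mul_of_stronglyMeasurable_left hφ hφG_int hG_int
  have step5 : μ[H * χ|m] =ᵐ[μ] H * μ[χ|m] :=
    condExp_mul_of_stronglyMeasurable_left hH_sm hHχ_int hχ_int
  calc ∫ ω, φ ω * r ω * χ ω ∂μ
      = ∫ ω, (φ * G) ω ∂μ := by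
        refine integral_congr_ae (Filter.Eventually.of_forall fun ω => ?_)
        simp only [Pi.mul_apply, hG_def]; ring
    _ = ∫ ω, (μ[φ * G|m]) ω ∂μ := (integral_condExp hm).symm
    _ = ∫ ω, (H * μ[χ|m]) ω ∂μ := by
        refine integral_congr_ae ?_
        filter_upwards [step3, hfac, hreal] with ω e1 e2 e3
        simp only [Pi.mul_apply] at e1 e2 ⊢
        rw [e1, e2, hH_def]
        simp only []
        rw [e3]
        ring
    _ = ∫ ω, (μ[H * χ|m]) ω ∂μ := (integral_congr_ae step5).symm
    _ = ∫ ω, (H * χ) ω ∂μ := integral_condExp hm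
    _ = ∫ ω, φ ω * g ω * χ ω ∂μ := by
        refine integral_congr_ae (Filter.Eventually.of_forall fun ω => ?_)
        simp only [Pi.mul_apply, hH_def]

/-- Mean and variance of the per-round excess-loss random variable in the realizable setting:
if `E[r(a) | X] = f*(X, a)` a.s. for every arm `a`, then
`E[Y] = (1/k) Σ_a E[(f(X,a) - f*(X,a))² χ(a)]` and `Var[Y] ≤ 4 E[Y]`. -/
theorem excess_loss_mean_variance_realizable
    {Ω 𝒳 α : Type*} [MeasurableSpace Ω] [StandardBorelSpace Ω] [Nonempty Ω]
    [MeasurableSpace 𝒳] [Fintype α]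
    (μ : Measure Ω) [IsProbabilityMeasure μ]
    (k : ℕ) (hk : 1 ≤ k)
    (X : Ω → 𝒳) (hX : Measurable X)
    (r : α → Ω → ℝ) (hr_meas : ∀ a, Measurable (r a))
    (hr01 : ∀ a ω, r a ω ∈ Set.Icc (0 : ℝ) 1)
    (χ : α → Ω → ℝ) (hχ_meas : ∀ a, Measurable (χ a))
    (hχ01 : ∀ a ω, χ a ω = 0 ∨ χ a ω = 1)
    (hsum : ∀ᵐ ω ∂μ, ∑ a : α, χ a ω ≤ (k : ℝ))
    (hcondindep : ∀ a : α, CondIndepFun (MeasurableSpace.comap X inferInstance)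
      hX.comap_le (χ a) (r a) μ)
    (f fstar : 𝒳 → α → ℝ)
    (hf_meas : ∀ a, Measurable fun x => f x a)
    (hfstar_meas : ∀ a, Measurable fun x => fstar x a)
    (hf01 : ∀ x a, f x a ∈ Set.Icc (0 : ℝ) 1)
    (hfstar01 : ∀ x a, fstar x a ∈ Set.Icc (0 : ℝ) 1)
    (hrealizable : ∀ a : α,
      μ[r a | MeasurableSpace.comap X inferInstance] =ᵐ[μ] fun ω => fstar (X ω) a)
    (Y : Ω → ℝ)
    (hY : Y = fun ω => (1 / (k : ℝ)) *
      ∑ a : α, ((f (X ω) a - r a ω) ^ 2 - (fstar (X ω) a - r a ω) ^ 2) * χ a ω) :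
    (∫ ω, Y ω ∂μ)
        = (1 / (k : ℝ)) * ∑ a : α, ∫ ω, (f (X ω) a - fstar (X ω) a) ^ 2 * χ a ω ∂μ
      ∧ ProbabilityTheory.variance Y μ ≤ 4 * ∫ ω, Y ω ∂μ := by
  classical
  have hk1 : (1 : ℝ) ≤ (k : ℝ) := by exact_mod_cast hk
  have hkpos : (0 : ℝ) < (k : ℝ) := lt_of_lt_of_le one_pos hk1
  have hkne : (k : ℝ) ≠ 0 := ne_of_gt hkpos
  -- basic norms
  have hχ_norm : ∀ a ω, ‖χ a ω‖ ≤ 1 := by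
    intro a ω; rcases hχ01 a ω with h | h <;> simp [h]
  have hr1 : ∀ a ω, ‖r a ω‖ ≤ 1 := by
    intro a ω
    rw [Real.norm_eq_abs, abs_le]
    exact ⟨by nlinarith [(hr01 a ω).1], (hr01 a ω).2⟩
  have hΔ1 : ∀ a ω, ‖f (X ω) a - fstar (X ω) a‖ ≤ 1 := by
    intro a ω
    rw [Real.norm_eq_abs, abs_le]
    constructor <;>
      nlinarith [(hf01 (X ω) a).1, (hf01 (X ω) a).2, (hfstar01 (X ω) a).1, (hfstar01 (X ω) a).2]
  have hfs1 : ∀ a ω, ‖fstar (X ω) a‖ ≤ 1 := by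
    intro a ω
    rw [Real.norm_eq_abs, abs_le]
    exact ⟨by nlinarith [(hfstar01 (X ω) a).1], (hfstar01 (X ω) a).2⟩
  have hmul11 : ∀ (u v : ℝ), ‖u‖ ≤ 1 → ‖v‖ ≤ 1 → ‖u * v‖ ≤ 1 := by
    intro u v hu hv
    calc ‖u * v‖ = ‖u‖ * ‖v‖ := norm_mul _ _
      _ ≤ 1 * 1 := mul_le_mul hu hv (norm_nonneg _) zero_le_one
      _ = 1 := one_mul 1
  -- measurability
  have hXm : Measurable[MeasurableSpace.comap X inferInstance] X :=
    measurable_iff_comap_le.mpr le_rfl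
  have hΔ_sm : ∀ a, StronglyMeasurable[MeasurableSpace.comap X inferInstance]
      (fun ω => f (X ω) a - fstar (X ω) a) :=
    fun a => (((hf_meas a).comp hXm).sub ((hfstar_meas a).comp hXm)).stronglyMeasurable
  have hfs_sm : ∀ a, StronglyMeasurable[MeasurableSpace.comap X inferInstance]
      (fun ω => fstar (X ω) a) :=
    fun a => ((hfstar_meas a).comp hXm).stronglyMeasurable
  have hΔ_meas : ∀ a, Measurable (fun ω => f (X ω) a - fstar (X ω) a) :=
    fun a => ((hf_meas a).comp hX).sub ((hfstar_meas a).comp hX)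
  have hL_meas : ∀ a, Measurable (fun ω =>
      ((f (X ω) a - r a ω) ^ 2 - (fstar (X ω) a - r a ω) ^ 2) * χ a ω) :=
    fun a => (((((hf_meas a).comp hX).sub (hr_meas a)).pow_const 2).sub
      ((((hfstar_meas a).comp hX).sub (hr_meas a)).pow_const 2)).mul (hχ_meas a)
  have hA_meas : ∀ a, Measurable (fun ω => (f (X ω) a - fstar (X ω) a) ^ 2 * χ a ω) :=
    fun a => ((hΔ_meas a).pow_const 2).mul (hχ_meas a)
  -- bounds on the integrands
  have hL_bd : ∀ a ω,
      ‖((f (X ω) a - r a ω) ^ 2 - (fstar (X ω) a - r a ω) ^ 2) * χ a ω‖ ≤ 1 := by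
    intro a ω
    refine hmul11 _ _ ?_ (hχ_norm a ω)
    rw [Real.norm_eq_abs, abs_le]
    constructor <;>
      nlinarith [(hf01 (X ω) a).1, (hf01 (X ω) a).2, (hfstar01 (X ω) a).1,
        (hfstar01 (X ω) a).2, (hr01 a ω).1, (hr01 a ω).2,
        sq_nonneg (f (X ω) a - r a ω), sq_nonneg (fstar (X ω) a - r a ω)]
  have hA_bd : ∀ a ω, ‖(f (X ω) a - fstar (X ω) a) ^ 2 * χ a ω‖ ≤ 1 := by
    intro a ω
    refine hmul11 _ _ ?_ (hχ_norm a ω)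
    rw [Real.norm_eq_abs, abs_le]
    constructor <;>
      nlinarith [(hf01 (X ω) a).1, (hf01 (X ω) a).2, (hfstar01 (X ω) a).1,
        (hfstar01 (X ω) a).2]
  -- integrabilities
  have hL_int : ∀ a, Integrable (fun ω =>
      ((f (X ω) a - r a ω) ^ 2 - (fstar (X ω) a - r a ω) ^ 2) * χ a ω) μ :=
    fun a => int_bdd (hL_meas a).aestronglyMeasurable (hL_bd a)
  have hA_int : ∀ a, Integrable (fun ω => (f (X ω) a - fstar (X ω) a) ^ 2 * χ a ω) μ :=
    fun a => int_bdd (hA_meas a).aestronglyMeasurable (hA_bd a)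
  have hB_int : ∀ a, Integrable
      (fun ω => (f (X ω) a - fstar (X ω) a) * fstar (X ω) a * χ a ω) μ := by
    intro a
    refine int_bdd (((hΔ_meas a).mul ((hfstar_meas a).comp hX)).mul
      (hχ_meas a)).aestronglyMeasurable (C := 1) fun ω => ?_
    exact hmul11 _ _ (hmul11 _ _ (hΔ1 a ω) (hfs1 a ω)) (hχ_norm a ω)
  have hC_int : ∀ a, Integrable
      (fun ω => (f (X ω) a - fstar (X ω) a) * r a ω * χ a ω) μ := by
    intro a
    refine int_bdd (((hΔ_meas a).mul (hr_meas a)).mul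
      (hχ_meas a)).aestronglyMeasurable (C := 1) fun ω => ?_
    exact hmul11 _ _ (hmul11 _ _ (hΔ1 a ω) (hr1 a ω)) (hχ_norm a ω)
  -- the key cross-term identity
  have hBC : ∀ a, ∫ ω, (f (X ω) a - fstar (X ω) a) * r a ω * χ a ω ∂μ
      = ∫ ω, (f (X ω) a - fstar (X ω) a) * fstar (X ω) a * χ a ω ∂μ :=
    fun a => integral_mul_r_chi μ hX.comap_le (hχ_meas a) (hr_meas a) (hχ01 a)
      (hr1 a) (hcondindep a) (hΔ_sm a) (hΔ1 a) (hfs_sm a) (hfs1 a) (hrealizable a)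
  -- per-arm mean identity
  have hmean : ∀ a, ∫ ω, ((f (X ω) a - r a ω) ^ 2 - (fstar (X ω) a - r a ω) ^ 2) * χ a ω ∂μ
      = ∫ ω, (f (X ω) a - fstar (X ω) a) ^ 2 * χ a ω ∂μ := by
    intro a
    have hpt : (fun ω => ((f (X ω) a - r a ω) ^ 2 - (fstar (X ω) a - r a ω) ^ 2) * χ a ω)
        = fun ω => ((f (X ω) a - fstar (X ω) a) ^ 2 * χ a ω
            + 2 * ((f (X ω) a - fstar (X ω) a) * fstar (X ω) a * χ a ω))
          - 2 * ((f (X ω) a - fstar (X ω) a) * r a ω * χ a ω) := by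
      funext ω; ring
    rw [hpt]
    have h1 : Integrable (fun ω => (f (X ω) a - fstar (X ω) a) ^ 2 * χ a ω
        + 2 * ((f (X ω) a - fstar (X ω) a) * fstar (X ω) a * χ a ω)) μ :=
      (hA_int a).add ((hB_int a).const_mul 2)
    have h2 : Integrable (fun ω => 2 * ((f (X ω) a - fstar (X ω) a) * r a ω * χ a ω)) μ :=
      (hC_int a).const_mul 2
    rw [integral_sub h1 h2, integral_add (hA_int a) ((hB_int a).const_mul 2),
      integral_const_mul 2, integral_const_mul 2, hBC a]
    ring
  -- the expectation formula
  have hYapp : ∀ ω, Y ω = (1 / (k : ℝ)) *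
      ∑ a : α, ((f (X ω) a - r a ω) ^ 2 - (fstar (X ω) a - r a ω) ^ 2) * χ a ω := by
    intro ω; rw [hY]
  have hEY : (∫ ω, Y ω ∂μ)
      = (1 / (k : ℝ)) * ∑ a : α, ∫ ω, (f (X ω) a - fstar (X ω) a) ^ 2 * χ a ω ∂μ := by
    calc ∫ ω, Y ω ∂μ
        = ∫ ω, (1 / (k : ℝ)) *
            ∑ a : α, ((f (X ω) a - r a ω) ^ 2 - (fstar (X ω) a - r a ω) ^ 2) * χ a ω ∂μ :=
          integral_congr_ae (Eventually.of_forall hYapp)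
      _ = (1 / (k : ℝ)) * ∫ ω,
            ∑ a : α, ((f (X ω) a - r a ω) ^ 2 - (fstar (X ω) a - r a ω) ^ 2) * χ a ω ∂μ :=
          integral_const_mul _ _
      _ = (1 / (k : ℝ)) * ∑ a : α,
            ∫ ω, ((f (X ω) a - r a ω) ^ 2 - (fstar (X ω) a - r a ω) ^ 2) * χ a ω ∂μ := by
          rw [integral_finset_sum _ (fun a _ => hL_int a)]
      _ = (1 / (k : ℝ)) * ∑ a : α, ∫ ω, (f (X ω) a - fstar (X ω) a) ^ 2 * χ a ω ∂μ := by
          rw [Finset.sum_congr rfl fun a _ => hmean a]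
  refine ⟨hEY, ?_⟩
  -- variance bound
  have hY_meas : Measurable Y := by
    rw [hY]
    exact measurable_const.mul (Finset.measurable_sum _ fun a _ => hL_meas a)
  have hk_inv_norm : ‖(1 / (k : ℝ))‖ ≤ 1 := by
    rw [Real.norm_eq_abs, abs_of_nonneg (by positivity), div_le_one hkpos]
    exact hk1
  have hYbd : ∀ ω, ‖Y ω‖ ≤ (Fintype.card α : ℝ) := by
    intro ω
    rw [hYapp ω]
    calc ‖(1 / (k : ℝ)) * ∑ a : α,
          ((f (X ω) a - r a ω) ^ 2 - (fstar (X ω) a - r a ω) ^ 2) * χ a ω‖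
        = ‖(1 / (k : ℝ))‖ * ‖∑ a : α,
          ((f (X ω) a - r a ω) ^ 2 - (fstar (X ω) a - r a ω) ^ 2) * χ a ω‖ := norm_mul _ _
      _ ≤ 1 * (Fintype.card α : ℝ) := by
          refine mul_le_mul hk_inv_norm ?_ (norm_nonneg _) zero_le_one
          calc ‖∑ a : α, ((f (X ω) a - r a ω) ^ 2 - (fstar (X ω) a - r a ω) ^ 2) * χ a ω‖
              ≤ ∑ a : α, ‖((f (X ω) a - r a ω) ^ 2 - (fstar (X ω) a - r a ω) ^ 2) * χ a ω‖ :=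
                norm_sum_le _ _
            _ ≤ ∑ _a : α, (1:ℝ) := Finset.sum_le_sum fun a _ => hL_bd a ω
            _ = (Fintype.card α : ℝ) := by simp
      _ = (Fintype.card α : ℝ) := one_mul _
  have hY_int : Integrable Y μ := int_bdd hY_meas.aestronglyMeasurable hYbd
  have hY2_int : Integrable (fun ω => Y ω ^ 2) μ := by
    refine int_bdd ((hY_meas.pow_const 2).aestronglyMeasurable)
      (C := (Fintype.card α : ℝ) ^ 2) fun ω => ?_
    rw [norm_pow]
    exact pow_le_pow_left₀ (norm_nonneg _) (hYbd ω) 2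
  have hMem2 : MemLp Y 2 μ :=
    (memLp_top_of_bound hY_meas.aestronglyMeasurable _
      (Eventually.of_forall hYbd)).mono_exponent le_top
  have hvar_le : variance Y μ ≤ ∫ ω, Y ω ^ 2 ∂μ := by
    have h := variance_eq_sub hMem2
    have h2 : (∫ ω, (Y ^ 2) ω ∂μ) = ∫ ω, Y ω ^ 2 ∂μ := by
      refine integral_congr_ae (Eventually.of_forall fun ω => ?_)
      simp [Pi.pow_apply]
    rw [h, h2]
    nlinarith [sq_nonneg (∫ ω, Y ω ∂μ)]
  -- pointwise bound Y² ≤ 4 Z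
  have hptwise : ∀ᵐ ω ∂μ, Y ω ^ 2
      ≤ 4 * ((1 / (k : ℝ)) * ∑ a : α, (f (X ω) a - fstar (X ω) a) ^ 2 * χ a ω) := by
    filter_upwards [hsum] with ω hω
    set S : ℝ := ∑ a : α, ((f (X ω) a - r a ω) ^ 2 - (fstar (X ω) a - r a ω) ^ 2) * χ a ω
      with hS_def
    set T : ℝ := ∑ a : α, (f (X ω) a - fstar (X ω) a) ^ 2 * χ a ω with hT_def
    have hA_nonneg : ∀ a : α, 0 ≤ (f (X ω) a - fstar (X ω) a) ^ 2 * χ a ω := by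
      intro a; rcases hχ01 a ω with h | h <;> simp [h] <;> positivity
    have hT_nonneg : 0 ≤ T := Finset.sum_nonneg fun a _ => hA_nonneg a
    have hFG : ∀ a : α, (((f (X ω) a - r a ω) ^ 2 - (fstar (X ω) a - r a ω) ^ 2) * χ a ω)
        * χ a ω = ((f (X ω) a - r a ω) ^ 2 - (fstar (X ω) a - r a ω) ^ 2) * χ a ω := by
      intro a; rcases hχ01 a ω with h | h <;> simp [h]
    have hF2 : ∀ a : α, (((f (X ω) a - r a ω) ^ 2 - (fstar (X ω) a - r a ω) ^ 2) * χ a ω) ^ 2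
        ≤ 4 * ((f (X ω) a - fstar (X ω) a) ^ 2 * χ a ω) := by
      intro a
      rcases hχ01 a ω with h | h
      · simp [h]
      · simp only [h, mul_one]
        have hv : (f (X ω) a + fstar (X ω) a - 2 * r a ω) ^ 2 ≤ 4 := by
          nlinarith [(hf01 (X ω) a).1, (hf01 (X ω) a).2, (hfstar01 (X ω) a).1,
            (hfstar01 (X ω) a).2, (hr01 a ω).1, (hr01 a ω).2]
        calc ((f (X ω) a - r a ω) ^ 2 - (fstar (X ω) a - r a ω) ^ 2) ^ 2
            = (f (X ω) a - fstar (X ω) a) ^ 2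
              * (f (X ω) a + fstar (X ω) a - 2 * r a ω) ^ 2 := by ring
          _ ≤ (f (X ω) a - fstar (X ω) a) ^ 2 * 4 :=
              mul_le_mul_of_nonneg_left hv (sq_nonneg _)
          _ = 4 * (f (X ω) a - fstar (X ω) a) ^ 2 := by ring
    have hG2 : ∀ a : α, (χ a ω) ^ 2 = χ a ω := by
      intro a; rcases hχ01 a ω with h | h <;> simp [h]
    have hcs := Finset.sum_mul_sq_le_sq_mul_sq Finset.univ
      (fun a => ((f (X ω) a - r a ω) ^ 2 - (fstar (X ω) a - r a ω) ^ 2) * χ a ω)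
      (fun a => χ a ω)
    have hsumF2 : ∑ a : α,
        ((((f (X ω) a - r a ω) ^ 2 - (fstar (X ω) a - r a ω) ^ 2) * χ a ω)) ^ 2
        ≤ 4 * T := by
      calc ∑ a : α, ((((f (X ω) a - r a ω) ^ 2 - (fstar (X ω) a - r a ω) ^ 2) * χ a ω)) ^ 2
          ≤ ∑ a : α, 4 * ((f (X ω) a - fstar (X ω) a) ^ 2 * χ a ω) :=
            Finset.sum_le_sum fun a _ => hF2 a
        _ = 4 * T := by rw [hT_def, Finset.mul_sum]
    have hsumG2 : ∑ a : α, (χ a ω) ^ 2 ≤ (k : ℝ) := by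
      calc ∑ a : α, (χ a ω) ^ 2 = ∑ a : α, χ a ω :=
            Finset.sum_congr rfl fun a _ => hG2 a
        _ ≤ (k : ℝ) := hω
    have hsumF2_nonneg : (0:ℝ) ≤ ∑ a : α,
        ((((f (X ω) a - r a ω) ^ 2 - (fstar (X ω) a - r a ω) ^ 2) * χ a ω)) ^ 2 :=
      Finset.sum_nonneg fun a _ => sq_nonneg _
    have hS2 : S ^ 2 ≤ (4 * T) * (k : ℝ) := by
      have h1 : S = ∑ a : α,
          (((f (X ω) a - r a ω) ^ 2 - (fstar (X ω) a - r a ω) ^ 2) * χ a ω) * χ a ω := by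
        rw [hS_def]
        exact (Finset.sum_congr rfl fun a _ => (hFG a).symm)
      rw [h1]
      calc (∑ a : α,
            (((f (X ω) a - r a ω) ^ 2 - (fstar (X ω) a - r a ω) ^ 2) * χ a ω) * χ a ω) ^ 2
          ≤ (∑ a : α,
              ((((f (X ω) a - r a ω) ^ 2 - (fstar (X ω) a - r a ω) ^ 2) * χ a ω)) ^ 2)
            * ∑ a : α, (χ a ω) ^ 2 := hcs
        _ ≤ (4 * T) * (k : ℝ) := by
            refine mul_le_mul hsumF2 hsumG2 ?_ (by linarith)
            exact Finset.sum_nonneg fun a _ => by nlinarith [hG2 a, sq_nonneg (χ a ω)]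
    have hYS : Y ω = (1 / (k : ℝ)) * S := hYapp ω
    rw [hYS]
    calc ((1 / (k : ℝ)) * S) ^ 2 = (1 / (k : ℝ)) ^ 2 * S ^ 2 := by ring
      _ ≤ (1 / (k : ℝ)) ^ 2 * ((4 * T) * (k : ℝ)) :=
          mul_le_mul_of_nonneg_left hS2 (sq_nonneg _)
      _ = 4 * ((1 / (k : ℝ)) * T) := by field_simp
  -- assembling
  have hZ_int : Integrable (fun ω =>
      4 * ((1 / (k : ℝ)) * ∑ a : α, (f (X ω) a - fstar (X ω) a) ^ 2 * χ a ω)) μ := by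
    refine int_bdd ((measurable_const.mul (measurable_const.mul
      (Finset.measurable_sum _ fun a _ => hA_meas a))).aestronglyMeasurable)
      (C := 4 * (1 * (Fintype.card α : ℝ))) fun ω => ?_
    calc ‖4 * ((1 / (k : ℝ)) * ∑ a : α, (f (X ω) a - fstar (X ω) a) ^ 2 * χ a ω)‖
        = ‖(4:ℝ)‖ * (‖(1 / (k : ℝ))‖ * ‖∑ a : α, (f (X ω) a - fstar (X ω) a) ^ 2 * χ a ω‖) := by
          rw [norm_mul, norm_mul]
      _ ≤ 4 * (1 * (Fintype.card α : ℝ)) := by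
          have hn : ‖∑ a : α, (f (X ω) a - fstar (X ω) a) ^ 2 * χ a ω‖
              ≤ (Fintype.card α : ℝ) := by
            calc ‖∑ a : α, (f (X ω) a - fstar (X ω) a) ^ 2 * χ a ω‖
                ≤ ∑ a : α, ‖(f (X ω) a - fstar (X ω) a) ^ 2 * χ a ω‖ := norm_sum_le _ _
              _ ≤ ∑ _a : α, (1:ℝ) := Finset.sum_le_sum fun a _ => hA_bd a ω
              _ = (Fintype.card α : ℝ) := by simp
          have h4 : ‖(4:ℝ)‖ = 4 := by norm_num
          rw [h4]
          refine mul_le_mul_of_nonneg_left ?_ (by norm_num)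
          exact mul_le_mul hk_inv_norm hn (norm_nonneg _) zero_le_one
  have hint_mono : ∫ ω, Y ω ^ 2 ∂μ ≤ ∫ ω,
      4 * ((1 / (k : ℝ)) * ∑ a : α, (f (X ω) a - fstar (X ω) a) ^ 2 * χ a ω) ∂μ :=
    integral_mono_ae hY2_int hZ_int hptwise
  have hZ_eq : ∫ ω,
      4 * ((1 / (k : ℝ)) * ∑ a : α, (f (X ω) a - fstar (X ω) a) ^ 2 * χ a ω) ∂μ
      = 4 * ∫ ω, Y ω ∂μ := by
    rw [integral_const_mul 4, integral_const_mul (1 / (k : ℝ)),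
      integral_finset_sum _ (fun a _ => hA_int a), hEY]
  calc variance Y μ ≤ ∫ ω, Y ω ^ 2 ∂μ := hvar_le
    _ ≤ ∫ ω, 4 * ((1 / (k : ℝ)) * ∑ a : α, (f (X ω) a - fstar (X ω) a) ^ 2 * χ a ω) ∂μ :=
        hint_mono
    _ = 4 * ∫ ω, Y ω ∂μ := hZ_eq
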